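/- In the Laguerre basis, under integration by parts (⟨b',ℓ_j⟩ = -⟨b,ℓ_j'⟩ for j < m), one has ‖b_m' - (b')_m‖² = 4m (Σ_{k=0}^{m-1} ⟨b,ℓ_k⟩)². -/

import Mathlib

open MeasureTheory

/-- The j-th Laguerre polynomial `L_j(x) = ∑_{k=0}^j C(j,k)(-1)^k x^k / k!`. -/
noncomputable def laguerrePoly (j : ℕ) (x : ℝ) : ℝ :=
  ∑ k ∈ Finset.range (j + 1), (j.choose k : ℝ) * (-1) ^ k * x ^ k / (Nat.factorial k)

/-- The scaled Laguerre function `ℓ_j(x) = √2 L_j(2x) e^{-x}`. -/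
noncomputable def laguerreFun (j : ℕ) (x : ℝ) : ℝ :=
  Real.sqrt 2 * laguerrePoly j (2 * x) * Real.exp (-x)

/-- Laguerre coefficient `⟨b, ℓ_j⟩ = ∫_0^∞ b ℓ_j` in L²(ℝ₊). -/
noncomputable def laguerreCoef (b : ℝ → ℝ) (j : ℕ) : ℝ :=
  ∫ x in Set.Ioi (0 : ℝ), b x * laguerreFun j x

/-- Orthogonal projection of `b` onto `span{ℓ_0,…,ℓ_{m-1}}`. -/
noncomputable def laguerreProj (b : ℝ → ℝ) (m : ℕ) (x : ℝ) : ℝ :=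
  ∑ j ∈ Finset.range m, laguerreCoef b j * laguerreFun j x

open Finset Set

/-! ### Combinatorial lemmas -/

/-- Generic Pascal splitting for alternating binomial sums. -/
lemma pascal_sum (k : ℕ) (f : ℕ → ℝ) :
    ∑ q ∈ range (k+2), (-1:ℝ)^q * ((k+1).choose q) * f q
    = ∑ q ∈ range (k+1), (-1:ℝ)^q * (k.choose q) * f q
      - ∑ q ∈ range (k+1), (-1:ℝ)^q * (k.choose q) * f (q+1) := by
  rw [Finset.sum_range_succ' (fun q => (-1:ℝ)^q * ((k+1).choose q) * f q) (k+1)]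
  have h1 : ∀ q, ((k+1).choose (q+1) : ℝ) = (k.choose q : ℝ) + (k.choose (q+1) : ℝ) := by
    intro q; rw [Nat.choose_succ_succ]; push_cast; ring
  have h2 : ∑ q ∈ range (k+1), (-1:ℝ)^(q+1) * ((k+1).choose (q+1)) * f (q+1)
      = (∑ q ∈ range (k+1), -((-1:ℝ)^q * (k.choose q) * f (q+1)))
        + ∑ q ∈ range (k+1), (-1:ℝ)^(q+1) * (k.choose (q+1)) * f (q+1) := by
    rw [← Finset.sum_add_distrib]
    apply Finset.sum_congr rfl
    intro q _
    rw [h1]; ring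
  rw [h2]
  have h3 : ∑ q ∈ range (k+1), (-1:ℝ)^(q+1) * (k.choose (q+1)) * f (q+1)
      = ∑ q ∈ range (k+1), (-1:ℝ)^q * (k.choose q) * f q - (-1:ℝ)^0 * (k.choose 0) * f 0 := by
    rw [Finset.sum_range_succ' (fun q => (-1:ℝ)^q * (k.choose q) * f q) k]
    rw [Finset.sum_range_succ (fun q => (-1:ℝ)^(q+1) * (k.choose (q+1)) * f (q+1)) k]
    simp [Nat.choose_succ_self]
  rw [h3]
  simp only [Finset.sum_neg_distrib, Nat.choose_zero_right, Nat.cast_one, pow_zero]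
  ring

/-- Key alternating-sum identity `∑_q (-1)^q C(k,q) C(n+q,p) = (-1)^k [k≤p] C(n,p-k)`. -/
lemma alt_sum_choose (k p : ℕ) : ∀ n : ℕ,
    ∑ q ∈ range (k+1), (-1:ℝ)^q * (k.choose q) * ((n+q).choose p)
    = (-1)^k * (if k ≤ p then ((n.choose (p-k)) : ℝ) else 0) := by
  induction k with
  | zero => intro n; simp
  | succ k ih =>
    intro n
    have step := pascal_sum k (fun q => ((n+q).choose p : ℝ))
    have step2 : ∑ q ∈ range (k+1), (-1:ℝ)^q * (k.choose q) * ((n+(q+1)).choose p)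
        = ∑ q ∈ range (k+1), (-1:ℝ)^q * (k.choose q) * (((n+1)+q).choose p) := by
      apply Finset.sum_congr rfl; intro q _
      have : n+(q+1) = n+1+q := by omega
      rw [this]
    rw [show k+1+1 = k+2 from rfl, step]
    have e1 := ih n
    have e2 := ih (n+1)
    rw [step2, e1, e2]
    by_cases h1 : k + 1 ≤ p
    · have hk : k ≤ p := by omega
      simp only [if_pos hk, if_pos h1]
      have hpk : p - k = (p - (k+1)) + 1 := by omega
      rw [hpk, Nat.choose_succ_succ]
      push_cast
      ring
    · rw [if_neg h1]
      by_cases hk : k ≤ p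
      · have : p = k := by omega
        subst this
        simp
      · simp only [if_neg hk]
        ring

/-- The combinatorial heart of Laguerre orthonormality. -/
lemma comb_orth (j k : ℕ) :
    ∑ p ∈ range (j+1), ∑ q ∈ range (k+1),
      ((j.choose p : ℝ) * (-1)^p / (Nat.factorial p)) * ((k.choose q : ℝ) * (-1)^q / (Nat.factorial q))
        * ((Nat.factorial (p+q)) : ℝ)
    = if j = k then 1 else 0 := by
  have hterm : ∀ p q : ℕ, ((j.choose p : ℝ) * (-1)^p / (Nat.factorial p)) * ((k.choose q : ℝ) * (-1)^q / (Nat.factorial q)) * ((Nat.factorial (p+q)) : ℝ)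
      = ((-1:ℝ)^p * (j.choose p)) * ((-1:ℝ)^q * (k.choose q) * (((p+q).choose p : ℝ))) := by
    intro p q
    have h : ((Nat.factorial (p+q)) : ℝ) = (((p+q).choose p : ℝ)) * (Nat.factorial p) * (Nat.factorial q) := by
      rw [Nat.choose_symm_add]
      exact_mod_cast (Nat.add_choose_mul_factorial_mul_factorial p q).symm
    rw [h]
    have hp : ((Nat.factorial p : ℝ)) ≠ 0 := Nat.cast_ne_zero.mpr (Nat.factorial_ne_zero p)
    have hq : ((Nat.factorial q : ℝ)) ≠ 0 := Nat.cast_ne_zero.mpr (Nat.factorial_ne_zero q)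
    field_simp
  have h1 : ∑ p ∈ range (j+1), ∑ q ∈ range (k+1),
      ((j.choose p : ℝ) * (-1)^p / (Nat.factorial p)) * ((k.choose q : ℝ) * (-1)^q / (Nat.factorial q))
        * ((Nat.factorial (p+q)) : ℝ)
      = ∑ p ∈ range (j+1), ((-1:ℝ)^p * (j.choose p)) *
          ∑ q ∈ range (k+1), (-1:ℝ)^q * (k.choose q) * (((p+q).choose p : ℝ)) := by
    apply Finset.sum_congr rfl; intro p _
    rw [Finset.mul_sum]
    apply Finset.sum_congr rfl; intro q _
    exact hterm p q
  rw [h1]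
  have h2 : ∀ p : ℕ, (∑ q ∈ range (k+1), (-1:ℝ)^q * (k.choose q) * (((p+q).choose p : ℝ)))
      = (-1:ℝ)^k * (p.choose k : ℝ) := by
    intro p
    rw [alt_sum_choose k p p]
    congr 1
    split_ifs with h
    · exact_mod_cast Nat.choose_symm h
    · symm
      exact_mod_cast Nat.choose_eq_zero_of_lt (show p < k by omega)
  have h3 : ∑ p ∈ range (j+1), ((-1:ℝ)^p * (j.choose p)) * ((-1:ℝ)^k * (p.choose k : ℝ))
      = (-1:ℝ)^k * ∑ p ∈ range (j+1), (-1:ℝ)^p * (j.choose p) * (((0+p).choose k : ℝ)) := by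
    rw [Finset.mul_sum]
    apply Finset.sum_congr rfl; intro p _
    rw [zero_add]
    ring
  simp_rw [h2]
  rw [h3, alt_sum_choose j k 0]
  by_cases hjk : j = k
  · subst hjk
    rw [if_pos le_rfl]
    simp only [Nat.sub_self, Nat.choose_self, Nat.cast_one]
    norm_num [← mul_pow]
  · rw [if_neg hjk]
    rcases le_or_gt j k with h | h
    · have : 0 < k - j := by omega
      rw [if_pos h, Nat.choose_eq_zero_of_lt this]
      simp
    · rw [if_neg (by omega)]
      simp

/-! ### Integrals of monomials against exponentials -/

lemma integrableOn_pow_exp (n : ℕ) :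
    IntegrableOn (fun x : ℝ => x ^ n * Real.exp (-x)) (Ioi 0) := by
  have h := Real.GammaIntegral_convergent (s := n+1) (by positivity)
  apply h.congr_fun ?_ measurableSet_Ioi
  intro x hx
  simp only
  rw [add_sub_cancel_right, Real.rpow_natCast, mul_comm]

lemma integral_pow_exp (n : ℕ) :
    ∫ x in Ioi (0:ℝ), x ^ n * Real.exp (-x) = Nat.factorial n := by
  have h := Real.Gamma_eq_integral (s := n+1) (by positivity)
  rw [Real.Gamma_nat_eq_factorial] at h
  rw [h]
  apply setIntegral_congr_fun measurableSet_Ioi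
  intro x hx
  simp only
  rw [add_sub_cancel_right, Real.rpow_natCast, mul_comm]

lemma integrableOn_scaled (n : ℕ) :
    IntegrableOn (fun x : ℝ => 2 * ((2*x)^n * Real.exp (-(2*x)))) (Ioi 0) := by
  have hg := (integrableOn_pow_exp n).const_mul ((2:ℝ)^(n+1))
  refine Integrable.mono' hg ?_ ?_
  · apply Continuous.aestronglyMeasurable
    fun_prop
  · filter_upwards [self_mem_ae_restrict measurableSet_Ioi] with x hx
    have hx' : (0:ℝ) < x := hx
    rw [Real.norm_eq_abs, abs_of_nonneg (by positivity)]
    have key : 2 * ((2*x)^n * Real.exp (-(2*x))) = 2^(n+1) * (x^n * Real.exp (-(2*x))) := by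
      rw [mul_pow]; ring
    rw [key]
    have hexp : Real.exp (-(2*x)) ≤ Real.exp (-x) := Real.exp_le_exp.mpr (by linarith)
    have h1 : x^n * Real.exp (-(2*x)) ≤ x^n * Real.exp (-x) :=
      mul_le_mul_of_nonneg_left hexp (by positivity)
    have h2 : (0:ℝ) ≤ 2^(n+1) := by positivity
    exact mul_le_mul_of_nonneg_left h1 h2

lemma integral_scaled (n : ℕ) :
    ∫ x in Ioi (0:ℝ), 2 * ((2*x)^n * Real.exp (-(2*x))) = Nat.factorial n := by
  have h := integral_comp_mul_left_Ioi (fun u : ℝ => u ^ n * Real.exp (-u)) 0 (b := 2) two_pos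
  simp only [mul_zero, smul_eq_mul] at h
  rw [MeasureTheory.integral_const_mul]
  calc 2 * ∫ x in Ioi (0:ℝ), (2*x)^n * Real.exp (-(2*x))
      = 2 * (2⁻¹ * ∫ u in Ioi (0:ℝ), u ^ n * Real.exp (-u)) := by rw [← h]
    _ = Nat.factorial n := by rw [integral_pow_exp]; ring

/-! ### Laguerre products -/

lemma laguerreFun_mul (j k : ℕ) (x : ℝ) :
    laguerreFun j x * laguerreFun k x
    = ∑ p ∈ range (j+1), ∑ q ∈ range (k+1),
        (((j.choose p : ℝ) * (-1)^p / (Nat.factorial p)) * ((k.choose q : ℝ) * (-1)^q / (Nat.factorial q)))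
          * (2 * ((2*x)^(p+q) * Real.exp (-(2*x)))) := by
  have h2 : Real.sqrt 2 * Real.sqrt 2 = 2 := Real.mul_self_sqrt (by norm_num)
  have he : Real.exp (-x) * Real.exp (-x) = Real.exp (-(2*x)) := by
    rw [← Real.exp_add]; ring_nf
  unfold laguerreFun
  calc Real.sqrt 2 * laguerrePoly j (2*x) * Real.exp (-x) * (Real.sqrt 2 * laguerrePoly k (2*x) * Real.exp (-x))
      = (laguerrePoly j (2*x) * laguerrePoly k (2*x)) * ((Real.sqrt 2 * Real.sqrt 2) * (Real.exp (-x) * Real.exp (-x))) := by ring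
    _ = (laguerrePoly j (2*x) * laguerrePoly k (2*x)) * (2 * Real.exp (-(2*x))) := by rw [h2, he]
    _ = _ := by
        unfold laguerrePoly
        rw [Finset.sum_mul_sum, Finset.sum_mul]
        apply Finset.sum_congr rfl; intro p _
        rw [Finset.sum_mul]
        apply Finset.sum_congr rfl; intro q _
        rw [pow_add]
        ring

lemma integrableOn_laguerre_mul (j k : ℕ) :
    IntegrableOn (fun x => laguerreFun j x * laguerreFun k x) (Ioi (0:ℝ)) := by
  have heq : (fun x => laguerreFun j x * laguerreFun k x)
      = fun x => ∑ p ∈ range (j+1), ∑ q ∈ range (k+1),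
        (((j.choose p : ℝ) * (-1)^p / (Nat.factorial p)) * ((k.choose q : ℝ) * (-1)^q / (Nat.factorial q)))
          * (2 * ((2*x)^(p+q) * Real.exp (-(2*x)))) := funext (laguerreFun_mul j k)
  rw [heq]
  apply integrable_finset_sum
  intro p _
  apply integrable_finset_sum
  intro q _
  exact (integrableOn_scaled (p+q)).const_mul _

lemma laguerre_orthonormal (j k : ℕ) :
    ∫ x in Ioi (0:ℝ), laguerreFun j x * laguerreFun k x = if j = k then 1 else 0 := by
  have heq : (fun x => laguerreFun j x * laguerreFun k x)
      = fun x => ∑ p ∈ range (j+1), ∑ q ∈ range (k+1),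
        (((j.choose p : ℝ) * (-1)^p / (Nat.factorial p)) * ((k.choose q : ℝ) * (-1)^q / (Nat.factorial q)))
          * (2 * ((2*x)^(p+q) * Real.exp (-(2*x)))) := funext (laguerreFun_mul j k)
  rw [heq]
  rw [integral_finset_sum _ (fun p _ => integrable_finset_sum _
    (fun q _ => (integrableOn_scaled (p+q)).const_mul _))]
  rw [← comb_orth j k]
  apply Finset.sum_congr rfl; intro p _
  rw [integral_finset_sum _ (fun q _ => (integrableOn_scaled (p+q)).const_mul _)]
  apply Finset.sum_congr rfl; intro q _
  rw [MeasureTheory.integral_const_mul, integral_scaled]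

lemma laguerreFun_continuous (j : ℕ) : Continuous (laguerreFun j) := by
  unfold laguerreFun laguerrePoly
  fun_prop

lemma laguerreFun_memL2 (j : ℕ) :
    MemLp (laguerreFun j) 2 ((volume : Measure ℝ).restrict (Ioi 0)) := by
  rw [memLp_two_iff_integrable_sq ((laguerreFun_continuous j).aestronglyMeasurable)]
  simpa [pow_two] using (integrableOn_laguerre_mul j j).integrable

lemma integrable_mul_of_memL2 {α : Type*} [MeasurableSpace α] {μ : Measure α} {f g : α → ℝ}
    (hf : MemLp f 2 μ) (hg : MemLp g 2 μ) : Integrable (fun x => f x * g x) μ := by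
  refine Integrable.mono' (hf.integrable_sq.add hg.integrable_sq) (hf.1.mul hg.1) ?_
  filter_upwards with x
  simp only [Pi.add_apply]
  rw [Real.norm_eq_abs, abs_mul]
  nlinarith [sq_nonneg (|f x| - |g x|), sq_abs (f x), sq_abs (g x), abs_nonneg (f x),
    abs_nonneg (g x), abs_nonneg (f x * g x)]

/-! ### Derivatives -/

lemma hasDerivAt_laguerrePoly (j : ℕ) (u : ℝ) :
    HasDerivAt (laguerrePoly j)
      (∑ p ∈ range (j+1), (j.choose p : ℝ) * (-1)^p / (Nat.factorial p) * (p * u^(p-1))) u := by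
  unfold laguerrePoly
  apply HasDerivAt.fun_sum
  intro p _
  have h := ((hasDerivAt_pow p u).const_mul ((j.choose p : ℝ) * (-1)^p)).div_const (Nat.factorial p)
  convert h using 1
  · rfl
  ring

/-- `L_j' = -∑_{i<j} L_i` at the level of the coefficient sums. -/
lemma laguerrePoly_deriv_sum (j : ℕ) (u : ℝ) :
    ∑ p ∈ range (j+1), (j.choose p : ℝ) * (-1)^p / (Nat.factorial p) * (p * u^(p-1))
    = - ∑ i ∈ range j, laguerrePoly i u := by
  induction j with
  | zero => simp
  | succ j ih =>
    set f : ℕ → ℝ := fun p => (p : ℝ) * u^(p-1) / (Nat.factorial p) with hf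
    have shape : ∀ (n : ℕ), ∑ p ∈ range (n+1), (n.choose p : ℝ) * (-1)^p / (Nat.factorial p) * (p * u^(p-1))
        = ∑ p ∈ range (n+1), (-1:ℝ)^p * (n.choose p) * f p := by
      intro n
      apply Finset.sum_congr rfl; intro p _; rw [hf]; ring
    rw [shape (j+1), show j+1+1 = j+2 from rfl, pascal_sum j f]
    have h2 : ∑ q ∈ range (j+1), (-1:ℝ)^q * (j.choose q) * f (q+1)
        = laguerrePoly j u := by
      unfold laguerrePoly
      apply Finset.sum_congr rfl; intro q _
      rw [hf]
      simp only [Nat.add_sub_cancel]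
      have hfac : ((Nat.factorial (q+1)) : ℝ) = ((q:ℝ)+1) * (Nat.factorial q) := by
        rw [Nat.factorial_succ]; push_cast; ring
      rw [hfac]
      have hq : ((Nat.factorial q : ℝ)) ≠ 0 := Nat.cast_ne_zero.mpr (Nat.factorial_ne_zero q)
      have hq1 : ((q:ℝ)+1) ≠ 0 := by positivity
      push_cast
      field_simp
    rw [h2, ← shape j, ih, Finset.sum_range_succ]
    ring

lemma hasDerivAt_laguerreFun (j : ℕ) (x : ℝ) :
    HasDerivAt (laguerreFun j)
      (-laguerreFun j x - 2 * ∑ i ∈ range j, laguerreFun i x) x := by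
  have hP := hasDerivAt_laguerrePoly j (2*x)
  have hinner : HasDerivAt (fun x : ℝ => 2 * x) 2 x := by
    simpa using (hasDerivAt_id x).const_mul 2
  have hcomp : HasDerivAt (fun x : ℝ => laguerrePoly j (2*x))
      ((∑ p ∈ range (j+1), (j.choose p : ℝ) * (-1)^p / (Nat.factorial p) * (p * (2*x)^(p-1))) * 2) x :=
    HasDerivAt.comp x hP hinner
  have hexp : HasDerivAt (fun x : ℝ => Real.exp (-x)) (-Real.exp (-x)) x := by
    simpa using ((hasDerivAt_id x).neg).exp
  have hprod := ((hcomp.const_mul (Real.sqrt 2)).mul hexp)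
  have h' : HasDerivAt (laguerreFun j)
      (Real.sqrt 2 * ((∑ p ∈ range (j+1), (j.choose p : ℝ) * (-1)^p / (Nat.factorial p) * (p * (2*x)^(p-1))) * 2) * Real.exp (-x)
        + Real.sqrt 2 * laguerrePoly j (2*x) * (-Real.exp (-x))) x := hprod
  convert h' using 1
  rw [laguerrePoly_deriv_sum j (2*x)]
  have hsum : ∑ i ∈ range j, laguerreFun i x
      = (Real.sqrt 2 * Real.exp (-x)) * ∑ i ∈ range j, laguerrePoly i (2*x) := by
    rw [Finset.mul_sum]
    apply Finset.sum_congr rfl; intro i _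
    unfold laguerreFun; ring
  rw [hsum]
  unfold laguerreFun
  ring

lemma deriv_laguerreFun (j : ℕ) (x : ℝ) :
    deriv (laguerreFun j) x = -laguerreFun j x - 2 * ∑ i ∈ range j, laguerreFun i x :=
  (hasDerivAt_laguerreFun j x).deriv

/-! ### Algebraic identity -/

lemma sum_algebra (m : ℕ) (a l : ℕ → ℝ) :
    ∑ j ∈ range m, a j * (-(l j) - 2 * ∑ k ∈ range j, l k)
    - ∑ j ∈ range m, (a j + 2 * ∑ k ∈ range j, a k) * l j
    = -2 * (∑ j ∈ range m, a j) * (∑ k ∈ range m, l k) := by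
  induction m with
  | zero => simp
  | succ m ih =>
    rw [Finset.sum_range_succ, Finset.sum_range_succ, Finset.sum_range_succ, Finset.sum_range_succ]
    linear_combination ih

/-! ### Main theorem -/

/-- In the Laguerre basis, under integration by parts (`⟨b',ℓ_j⟩ = -⟨b,ℓ_j'⟩` for `j < m`),
one has `‖b_m' - (b')_m‖² = 4m (∑_{k=0}^{m-1} ⟨b,ℓ_k⟩)²`. -/
theorem laguerre_deriv_proj_diff (m : ℕ) (b : ℝ → ℝ)
    (hb : Differentiable ℝ b)
    (hbL2 : MemLp b 2 ((volume : Measure ℝ).restrict (Set.Ioi 0)))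
    (hb'L2 : MemLp (deriv b) 2 ((volume : Measure ℝ).restrict (Set.Ioi 0)))
    (hIPP : ∀ j < m,
      (∫ x in Set.Ioi (0 : ℝ), deriv b x * laguerreFun j x)
        = -∫ x in Set.Ioi (0 : ℝ), b x * deriv (laguerreFun j) x) :
    (∫ x in Set.Ioi (0 : ℝ),
        (deriv (laguerreProj b m) x - laguerreProj (deriv b) m x) ^ 2)
      = 4 * (m : ℝ) * (∑ k ∈ Finset.range m, laguerreCoef b k) ^ 2 := by
  set a : ℕ → ℝ := laguerreCoef b with ha
  set S : ℝ := ∑ k ∈ Finset.range m, a k with hS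
  -- integrability of b against each ℓ_k
  have hbl : ∀ k : ℕ, IntegrableOn (fun x => b x * laguerreFun k x) (Ioi (0:ℝ)) :=
    fun k => integrable_mul_of_memL2 hbL2 (laguerreFun_memL2 k)
  -- Step 1: coefficients of the projected derivative
  have hcoef : ∀ j < m, laguerreCoef (deriv b) j = a j + 2 * ∑ k ∈ range j, a k := by
    intro j hj
    have h1 : laguerreCoef (deriv b) j
        = -∫ x in Set.Ioi (0 : ℝ), b x * deriv (laguerreFun j) x := hIPP j hj
    have h2 : ∀ x : ℝ, b x * deriv (laguerreFun j) x
        = -(b x * laguerreFun j x) - 2 * ∑ k ∈ range j, b x * laguerreFun k x := by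
      intro x
      rw [deriv_laguerreFun]
      have hms : ∑ k ∈ range j, b x * laguerreFun k x = b x * ∑ k ∈ range j, laguerreFun k x :=
        (Finset.mul_sum _ _ _).symm
      rw [hms]
      ring
    rw [h1]
    have h3 : ∫ x in Set.Ioi (0 : ℝ), b x * deriv (laguerreFun j) x
        = -(a j) - 2 * ∑ k ∈ range j, a k := by
      have := MeasureTheory.integral_congr_ae (μ := (volume : Measure ℝ).restrict (Set.Ioi 0))
        (Filter.EventuallyEq.of_eq (funext h2))
      rw [this]
      have hint1 : Integrable (fun x => -(b x * laguerreFun j x))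
          ((volume : Measure ℝ).restrict (Set.Ioi 0)) := (hbl j).neg
      have hint2 : Integrable (fun x => 2 * ∑ k ∈ range j, b x * laguerreFun k x)
          ((volume : Measure ℝ).restrict (Set.Ioi 0)) :=
        (integrable_finset_sum _ (fun k _ => hbl k)).const_mul 2
      rw [MeasureTheory.integral_sub hint1 hint2]
      rw [MeasureTheory.integral_neg, MeasureTheory.integral_const_mul]
      rw [MeasureTheory.integral_finset_sum _ (fun k _ => hbl k)]
      rfl
    rw [h3]
    ring
  -- Step 2: the pointwise identity
  have hpoint : ∀ x : ℝ, deriv (laguerreProj b m) x - laguerreProj (deriv b) m x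
      = -2 * S * ∑ k ∈ range m, laguerreFun k x := by
    intro x
    have hd : HasDerivAt (laguerreProj b m)
        (∑ j ∈ range m, a j * (-(laguerreFun j x) - 2 * ∑ k ∈ range j, laguerreFun k x)) x := by
      unfold laguerreProj
      apply HasDerivAt.fun_sum
      intro j _
      exact (hasDerivAt_laguerreFun j x).const_mul (a j)
    rw [hd.deriv]
    have hproj : laguerreProj (deriv b) m x
        = ∑ j ∈ range m, (a j + 2 * ∑ k ∈ range j, a k) * laguerreFun j x := by
      unfold laguerreProj
      apply Finset.sum_congr rfl
      intro j hj
      rw [hcoef j (Finset.mem_range.mp hj)]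
    rw [hproj, sum_algebra m a (fun k => laguerreFun k x)]
  -- Step 3: compute the integral
  have hsq : ∀ x : ℝ, (deriv (laguerreProj b m) x - laguerreProj (deriv b) m x) ^ 2
      = 4 * S^2 * ∑ j ∈ range m, ∑ k ∈ range m, laguerreFun j x * laguerreFun k x := by
    intro x
    rw [hpoint x]
    rw [mul_pow, mul_pow]
    rw [sq (∑ k ∈ range m, laguerreFun k x), Finset.sum_mul_sum]
    ring
  calc ∫ x in Set.Ioi (0 : ℝ), (deriv (laguerreProj b m) x - laguerreProj (deriv b) m x) ^ 2
      = ∫ x in Set.Ioi (0 : ℝ), 4 * S^2 * ∑ j ∈ range m, ∑ k ∈ range m, laguerreFun j x * laguerreFun k x := by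
        exact MeasureTheory.integral_congr_ae (Filter.EventuallyEq.of_eq (funext hsq))
    _ = 4 * S^2 * ∫ x in Set.Ioi (0 : ℝ), ∑ j ∈ range m, ∑ k ∈ range m, laguerreFun j x * laguerreFun k x := by
        rw [MeasureTheory.integral_const_mul]
    _ = 4 * S^2 * ∑ j ∈ range m, ∑ k ∈ range m, (if j = k then (1:ℝ) else 0) := by
        rw [MeasureTheory.integral_finset_sum _ (fun j _ => integrable_finset_sum _
          (fun k _ => integrableOn_laguerre_mul j k))]
        congr 1
        apply Finset.sum_congr rfl; intro j _
        rw [MeasureTheory.integral_finset_sum _ (fun k _ => integrableOn_laguerre_mul j k)]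
        apply Finset.sum_congr rfl; intro k _
        exact laguerre_orthonormal j k
    _ = 4 * (m : ℝ) * S ^ 2 := by
        have : ∑ j ∈ range m, ∑ k ∈ range m, (if j = k then (1:ℝ) else 0) = m := by
          have : ∀ j ∈ range m, ∑ k ∈ range m, (if j = k then (1:ℝ) else 0) = 1 := by
            intro j hj
            rw [Finset.sum_ite_eq (range m) j (fun _ => (1:ℝ))]
            rw [if_pos hj]
          rw [Finset.sum_congr rfl this]
          simp
        rw [this]
        ring
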